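/- arXiv:2002.00373 — 6 statements merged into one kernel-verified Lean document; each statement's English description precedes it below -/
import Mathlib

section
/- Let U ⊆ ℝ³ be open, let u : U → ℝ be smooth with u₃(x) ≠ 0 for all x ∈ U, and let λ ∈ ℝ satisfy x₁ ≠ λ and x₂ ≠ λ for all x = (x₁,x₂,x₃) ∈ U. Define the vector fields X = ∂₁ − ((x₃−λ)/(x₁−λ))·(u₁/u₃)·∂₃ and Y = ∂₂ − ((x₃−λ)/(x₂−λ))·(u₂/u₃)·∂₃ on U. Then at every point x ∈ U one has the identity [X,Y](x) = −((x₃−λ)/((x₁−λ)(x₂−λ)·u₃(x)²))·E(x)·∂₃, where E = (x₁−x₂)u₃u₁₂ + (x₂−x₃)u₁u₂₃ + (x₃−x₁)u₂u₁₃. In particular, if u satisfies the deformed Veronese web equation E = 0 on U, then [X,Y] = 0 identically on U. -/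
open scoped ContDiff

noncomputable section

/-- `pd i u x` is the partial derivative `∂u/∂xᵢ` at `x`. -/
def pd {n : ℕ} (i : Fin n) (u : (Fin n → ℝ) → ℝ) (x : Fin n → ℝ) : ℝ :=
  fderiv ℝ u x (Pi.single i 1)

/-- `pd2 i j u x` is the second partial derivative `∂²u/∂xᵢ∂xⱼ` at `x`. -/
def pd2 {n : ℕ} (i j : Fin n) (u : (Fin n → ℝ) → ℝ) (x : Fin n → ℝ) : ℝ :=
  pd i (pd j u) x

/-- Lie bracket of vector fields : `[X,Y](x) = DY(x)(X(x)) − DX(x)(Y(x))`. -/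
def lieBr {n : ℕ} (X Y : (Fin n → ℝ) → (Fin n → ℝ)) (x : Fin n → ℝ) : Fin n → ℝ :=
  fderiv ℝ Y x (X x) - fderiv ℝ X x (Y x)

/-- The deformed Veronese web operator
`(x₁−x₂)u₃u₁₂ + (x₂−x₃)u₁u₂₃ + (x₃−x₁)u₂u₁₃` (indices shifted to `0,1,2`). -/
def verE (u : (Fin 3 → ℝ) → ℝ) (x : Fin 3 → ℝ) : ℝ :=
  (x 0 - x 1) * pd 2 u x * pd2 0 1 u x
  + (x 1 - x 2) * pd 0 u x * pd2 1 2 u x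
  + (x 2 - x 0) * pd 1 u x * pd2 0 2 u x

/-- Projection onto the `i`-th coordinate, as a continuous linear map. -/
def prj (i : Fin 3) : (Fin 3 → ℝ) →L[ℝ] ℝ :=
  ContinuousLinearMap.proj (R := ℝ) (φ := fun _ : Fin 3 => ℝ) i

/-- The `j`-th partial of the full derivative, as a continuous linear map. -/
def Dtwo (u : (Fin 3 → ℝ) → ℝ) (x : Fin 3 → ℝ) (j : Fin 3) : (Fin 3 → ℝ) →L[ℝ] ℝ :=
  (ContinuousLinearMap.apply ℝ ℝ (Pi.single j 1 : Fin 3 → ℝ)).comp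
    (fderiv ℝ (fderiv ℝ u) x)

set_option maxHeartbeats 1000000 in
/-- the Lie bracket of the Lax vector fields of the deformed Veronese web
equation is proportional to `∂₃` with coefficient
`−((x₃−λ)/((x₁−λ)(x₂−λ)u₃²))·E`; in particular it vanishes on solutions. -/
theorem statement0 (U : Set (Fin 3 → ℝ)) (hU : IsOpen U)
    (u : (Fin 3 → ℝ) → ℝ) (hu : ContDiffOn ℝ ∞ u U)
    (hu3 : ∀ x ∈ U, pd 2 u x ≠ 0)
    (lam : ℝ) (hlam : ∀ x ∈ U, x 0 ≠ lam ∧ x 1 ≠ lam)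
    (X Y : (Fin 3 → ℝ) → (Fin 3 → ℝ))
    (hX : X = fun x => (Pi.single 0 1 : Fin 3 → ℝ)
        - (((x 2 - lam) / (x 0 - lam)) * (pd 0 u x / pd 2 u x)) • (Pi.single 2 1 : Fin 3 → ℝ))
    (hY : Y = fun x => (Pi.single 1 1 : Fin 3 → ℝ)
        - (((x 2 - lam) / (x 1 - lam)) * (pd 1 u x / pd 2 u x)) • (Pi.single 2 1 : Fin 3 → ℝ)) :
    (∀ x ∈ U, lieBr X Y x
        = (-((x 2 - lam) / ((x 0 - lam) * (x 1 - lam) * (pd 2 u x) ^ 2)) * verE u x)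
            • (Pi.single 2 1 : Fin 3 → ℝ))
    ∧ ((∀ x ∈ U, verE u x = 0) → ∀ x ∈ U, lieBr X Y x = 0) := by
  have main : ∀ x ∈ U, lieBr X Y x
      = (-((x 2 - lam) / ((x 0 - lam) * (x 1 - lam) * (pd 2 u x) ^ 2)) * verE u x)
          • (Pi.single 2 1 : Fin 3 → ℝ) := by
    intro x hx
    obtain ⟨hl0, hl1⟩ := hlam x hx
    have hx0 : x 0 - lam ≠ 0 := sub_ne_zero.2 hl0
    have hx1 : x 1 - lam ≠ 0 := sub_ne_zero.2 hl1
    have hu2 : pd 2 u x ≠ 0 := hu3 x hx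
    have hcu : ContDiffAt ℝ ∞ u x := hu.contDiffAt (hU.mem_nhds hx)
    have hfd : ContDiffAt ℝ ∞ (fderiv ℝ u) x := hcu.fderiv_right (by simp)
    have hfd' : DifferentiableAt ℝ (fderiv ℝ u) x := hfd.differentiableAt (by simp)
    have hpd : ∀ j : Fin 3, HasFDerivAt (pd j u) (Dtwo u x j) x := fun j =>
      ((ContinuousLinearMap.apply ℝ ℝ (Pi.single j 1 : Fin 3 → ℝ)).hasFDerivAt).comp x
        hfd'.hasFDerivAt
    have hpd2 : ∀ i j : Fin 3, pd2 i j u x = Dtwo u x j (Pi.single i 1) := by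
      intro i j
      have h := (hpd j).fderiv
      simp only [pd2, pd, h]
    have hsym0 := hcu.isSymmSndFDerivAt (by rw [minSmoothness_of_isRCLikeNormedField]; exact WithTop.coe_le_coe.2 (le_top : (2 : ℕ∞) ≤ ⊤))
    have hsym : ∀ i j : Fin 3, pd2 i j u x = pd2 j i u x := by
      intro i j
      rw [hpd2, hpd2]
      simp only [Dtwo, ContinuousLinearMap.comp_apply, ContinuousLinearMap.apply_apply]
      exact hsym0 _ _
    have hproj : ∀ i : Fin 3, HasFDerivAt (fun y : Fin 3 → ℝ => y i) (prj i) x := fun i =>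
      (ContinuousLinearMap.proj (R := ℝ) (φ := fun _ : Fin 3 => ℝ) i).hasFDerivAt
    have hinv0 : HasFDerivAt (fun y : Fin 3 → ℝ => (y 0 - lam)⁻¹)
        ((-((x 0 - lam) ^ 2)⁻¹) • prj 0) x :=
      (hasDerivAt_inv hx0).comp_hasFDerivAt x ((hproj 0).sub_const lam)
    have hinv1 : HasFDerivAt (fun y : Fin 3 → ℝ => (y 1 - lam)⁻¹)
        ((-((x 1 - lam) ^ 2)⁻¹) • prj 1) x :=
      (hasDerivAt_inv hx1).comp_hasFDerivAt x ((hproj 1).sub_const lam)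
    have hinvu : HasFDerivAt (fun y : Fin 3 → ℝ => (pd 2 u y)⁻¹)
        ((-((pd 2 u x) ^ 2)⁻¹) • Dtwo u x 2) x :=
      (hasDerivAt_inv hu2).comp_hasFDerivAt x (hpd 2)
    -- derivative of X
    have hXd : HasFDerivAt X
        ((0 : (Fin 3 → ℝ) →L[ℝ] (Fin 3 → ℝ)) -
          (((x 2 - lam) * (x 0 - lam)⁻¹ * (pd 0 u x * (pd 2 u x)⁻¹)) •
              (0 : (Fin 3 → ℝ) →L[ℝ] (Fin 3 → ℝ)) +
            (((x 2 - lam) * (x 0 - lam)⁻¹) •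
                (pd 0 u x • ((-((pd 2 u x) ^ 2)⁻¹) • Dtwo u x 2) + (pd 2 u x)⁻¹ • Dtwo u x 0) +
              (pd 0 u x * (pd 2 u x)⁻¹) •
                ((x 2 - lam) • ((-((x 0 - lam) ^ 2)⁻¹) • prj 0) + (x 0 - lam)⁻¹ • prj 2)
            ).smulRight (Pi.single 2 1 : Fin 3 → ℝ))) x := by
      rw [hX]
      simp only [div_eq_mul_inv]
      exact (hasFDerivAt_const (Pi.single 0 1 : Fin 3 → ℝ) x).sub
        (((((hproj 2).sub_const lam).mul hinv0).mul ((hpd 0).mul hinvu)).smul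
          (hasFDerivAt_const (Pi.single 2 1 : Fin 3 → ℝ) x))
    have hYd : HasFDerivAt Y
        ((0 : (Fin 3 → ℝ) →L[ℝ] (Fin 3 → ℝ)) -
          (((x 2 - lam) * (x 1 - lam)⁻¹ * (pd 1 u x * (pd 2 u x)⁻¹)) •
              (0 : (Fin 3 → ℝ) →L[ℝ] (Fin 3 → ℝ)) +
            (((x 2 - lam) * (x 1 - lam)⁻¹) •
                (pd 1 u x • ((-((pd 2 u x) ^ 2)⁻¹) • Dtwo u x 2) + (pd 2 u x)⁻¹ • Dtwo u x 1) +
              (pd 1 u x * (pd 2 u x)⁻¹) •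
                ((x 2 - lam) • ((-((x 1 - lam) ^ 2)⁻¹) • prj 1) + (x 1 - lam)⁻¹ • prj 2)
            ).smulRight (Pi.single 2 1 : Fin 3 → ℝ))) x := by
      rw [hY]
      simp only [div_eq_mul_inv]
      exact (hasFDerivAt_const (Pi.single 1 1 : Fin 3 → ℝ) x).sub
        (((((hproj 2).sub_const lam).mul hinv1).mul ((hpd 1).mul hinvu)).smul
          (hasFDerivAt_const (Pi.single 2 1 : Fin 3 → ℝ) x))
    have hXx : X x = (Pi.single 0 1 : Fin 3 → ℝ)
        - (((x 2 - lam) / (x 0 - lam)) * (pd 0 u x / pd 2 u x)) • (Pi.single 2 1 : Fin 3 → ℝ) := by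
      rw [hX]
    have hYx : Y x = (Pi.single 1 1 : Fin 3 → ℝ)
        - (((x 2 - lam) / (x 1 - lam)) * (pd 1 u x / pd 2 u x)) • (Pi.single 2 1 : Fin 3 → ℝ) := by
      rw [hY]
    have hpdval : ∀ j : Fin 3, fderiv ℝ u x (Pi.single j 1) = pd j u x := fun _ => rfl
    have hpd2' : ∀ i j : Fin 3, fderiv ℝ (fderiv ℝ u) x (Pi.single i 1) (Pi.single j 1)
        = pd2 i j u x := by
      intro i j
      rw [hpd2]
      simp [Dtwo]
    unfold lieBr
    rw [hXd.fderiv, hYd.fderiv, hXx, hYx]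
    funext i
    fin_cases i <;>
      simp only [ContinuousLinearMap.sub_apply, ContinuousLinearMap.add_apply,
        ContinuousLinearMap.smul_apply, ContinuousLinearMap.zero_apply,
        ContinuousLinearMap.smulRight_apply, ContinuousLinearMap.coe_smul', Pi.smul_apply,
        map_sub, map_smul, map_add, Dtwo, ContinuousLinearMap.comp_apply,
        ContinuousLinearMap.apply_apply, prj, ContinuousLinearMap.proj_apply,
        Pi.sub_apply, Pi.zero_apply, smul_eq_mul, Pi.single_apply, Fin.isValue]
    · norm_num [Pi.single_apply, Fin.ext_iff]
    · norm_num [Pi.single_apply, Fin.ext_iff]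
    · norm_num [Pi.single_apply, Fin.ext_iff, hpd2']
      rw [hsym 1 0, hsym 2 0, hsym 2 1]
      unfold verE
      field_simp
      ring
  exact ⟨main, fun hE x hx => by rw [main x hx, hE x hx, mul_zero, zero_smul]⟩
end
end

section
/- Let a₁,a₂,a₃,a₄ ∈ ℝ, let U ⊆ ℝ⁴ be open, and let u : U → ℝ be a smooth solution on U of the equation a₄[(x₁−x₂)u₃u₁₂+(x₂−x₃)u₁u₂₃+(x₃−x₁)u₂u₁₃] + a₃[(x₄−x₂)u₁u₂₄+(x₂−x₁)u₄u₁₂+(x₁−x₄)u₂u₁₄] + a₂[(x₃−x₄)u₁u₃₄+(x₁−x₃)u₄u₁₃+(x₄−x₁)u₃u₁₄] + a₁[(x₃−x₂)u₄u₂₃+(x₂−x₄)u₃u₂₄+(x₄−x₃)u₂u₃₄] = 0. Then for every smooth function φ : ℝ → ℝ, the composition v = φ ∘ u is also a solution of the same equation on U. -/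
open scoped ContDiff

noncomputable section

/-- The 4D linear combination of four copies of the deformed Veronese web equation
(equation (7) of the paper; indices shifted to `0,1,2,3`). -/
def hyE (a₁ a₂ a₃ a₄ : ℝ) (u : (Fin 4 → ℝ) → ℝ) (x : Fin 4 → ℝ) : ℝ :=
  a₄ * ((x 0 - x 1) * pd 2 u x * pd2 0 1 u x + (x 1 - x 2) * pd 0 u x * pd2 1 2 u x
        + (x 2 - x 0) * pd 1 u x * pd2 0 2 u x)
  + a₃ * ((x 3 - x 1) * pd 0 u x * pd2 1 3 u x + (x 1 - x 0) * pd 3 u x * pd2 0 1 u x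
        + (x 0 - x 3) * pd 1 u x * pd2 0 3 u x)
  + a₂ * ((x 2 - x 3) * pd 0 u x * pd2 2 3 u x + (x 0 - x 2) * pd 3 u x * pd2 0 2 u x
        + (x 3 - x 0) * pd 2 u x * pd2 0 3 u x)
  + a₁ * ((x 2 - x 1) * pd 3 u x * pd2 1 2 u x + (x 1 - x 3) * pd 2 u x * pd2 1 3 u x
        + (x 3 - x 2) * pd 1 u x * pd2 2 3 u x)

section Aux

variable {U : Set (Fin 4 → ℝ)} {u : (Fin 4 → ℝ) → ℝ} {φ : ℝ → ℝ} {x : Fin 4 → ℝ}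

lemma scalar_fderiv_apply (f : ℝ → ℝ) (y r : ℝ) :
    fderiv ℝ f y r = r * deriv f y := by
  have h := (fderiv ℝ f y).map_smul r (1 : ℝ)
  simp only [smul_eq_mul, mul_one, fderiv_apply_one_eq_deriv] at h
  exact h

lemma one_le_inf : (∞ : WithTop ℕ∞) ≠ 0 := by
  simp

lemma pd_comp_aux (hU : IsOpen U) (hu : ContDiffOn ℝ ∞ u U) (hφ : ContDiff ℝ ∞ φ)
    (hx : x ∈ U) (j : Fin 4) :
    pd j (φ ∘ u) x = deriv φ (u x) * pd j u x := by
  have hud : DifferentiableAt ℝ u x :=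
    (hu.contDiffAt (hU.mem_nhds hx)).differentiableAt one_le_inf
  have hφd : DifferentiableAt ℝ φ (u x) := hφ.differentiable one_le_inf _
  unfold pd
  rw [fderiv_comp x hφd hud, ContinuousLinearMap.comp_apply, scalar_fderiv_apply]
  ring

lemma pd_contDiffOn (hU : IsOpen U) (hu : ContDiffOn ℝ ∞ u U) (j : Fin 4) :
    ContDiffOn ℝ ∞ (pd j u) U := by
  have h1 : ContDiffOn ℝ ∞ (fderiv ℝ u) U := hu.fderiv_of_isOpen hU le_rfl
  exact h1.clm_apply contDiffOn_const

lemma pd2_comp_aux (hU : IsOpen U) (hu : ContDiffOn ℝ ∞ u U) (hφ : ContDiff ℝ ∞ φ)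
    (hx : x ∈ U) (i j : Fin 4) :
    pd2 i j (φ ∘ u) x
      = deriv (deriv φ) (u x) * pd i u x * pd j u x + deriv φ (u x) * pd2 i j u x := by
  have hφ' : ContDiff ℝ ∞ (deriv φ) := (contDiff_infty_iff_deriv.mp hφ).2
  have hud : DifferentiableAt ℝ u x :=
    (hu.contDiffAt (hU.mem_nhds hx)).differentiableAt one_le_inf
  set F : (Fin 4 → ℝ) → ℝ := fun y => deriv φ (u y) with hF
  set G : (Fin 4 → ℝ) → ℝ := pd j u with hG
  have hGd : DifferentiableAt ℝ G x :=
    ((pd_contDiffOn hU hu j).contDiffAt (hU.mem_nhds hx)).differentiableAt one_le_inf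
  have hFd : DifferentiableAt ℝ F x :=
    ((hφ'.differentiable one_le_inf).differentiableAt).comp x hud
  have heq : pd j (φ ∘ u) =ᶠ[nhds x] fun y => F y * G y := by
    filter_upwards [hU.mem_nhds hx] with y hy
    exact pd_comp_aux hU hu hφ hy j
  have key : fderiv ℝ (pd j (φ ∘ u)) x = fderiv ℝ (fun y => F y * G y) x := heq.fderiv_eq
  have hmul := fderiv_fun_mul hFd hGd
  have hFi : fderiv ℝ F x (Pi.single i 1) = deriv (deriv φ) (u x) * pd i u x :=
    pd_comp_aux hU hu hφ' hx i
  calc pd2 i j (φ ∘ u) x = fderiv ℝ (pd j (φ ∘ u)) x (Pi.single i 1) := rfl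
    _ = fderiv ℝ (fun y => F y * G y) x (Pi.single i 1) := by rw [key]
    _ = F x * fderiv ℝ G x (Pi.single i 1) + G x * fderiv ℝ F x (Pi.single i 1) := by
        rw [hmul]; simp [smul_eq_mul]
    _ = _ := by rw [hFi]; show F x * pd2 i j u x + pd j u x * _ = _; ring

end Aux

/-- if `u` solves equation (7) on `U`, then so does `φ ∘ u`
for any smooth `φ : ℝ → ℝ`. -/
theorem statement5 (a₁ a₂ a₃ a₄ : ℝ) (U : Set (Fin 4 → ℝ)) (hU : IsOpen U)
    (u : (Fin 4 → ℝ) → ℝ) (hu : ContDiffOn ℝ ∞ u U)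
    (hsol : ∀ x ∈ U, hyE a₁ a₂ a₃ a₄ u x = 0)
    (φ : ℝ → ℝ) (hφ : ContDiff ℝ ∞ φ) :
    ∀ x ∈ U, hyE a₁ a₂ a₃ a₄ (φ ∘ u) x = 0 := by
  intro x hx
  have h1 : ∀ j : Fin 4, pd j (φ ∘ u) x = deriv φ (u x) * pd j u x :=
    fun j => pd_comp_aux hU hu hφ hx j
  have h2 : ∀ i j : Fin 4, pd2 i j (φ ∘ u) x
      = deriv (deriv φ) (u x) * pd i u x * pd j u x + deriv φ (u x) * pd2 i j u x :=
    fun i j => pd2_comp_aux hU hu hφ hx i j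
  have hs := hsol x hx
  unfold hyE at hs ⊢
  simp only [h1, h2]
  linear_combination (deriv φ (u x))^2 * hs
end
end

section
/- Let U ⊆ ℝ⁴ be open and let u : U → ℝ be a smooth solution of the second heavenly equation u₁₃ + u₂₄ + u₁₁u₂₂ − u₁₂² = 0 on U. Then for every λ ∈ ℝ, the vector fields X = ∂₄ + u₁₁∂₂ − u₁₂∂₁ + λ∂₁ and Y = ∂₃ + u₂₂∂₁ − u₁₂∂₂ − λ∂₂ satisfy [X,Y] = 0 identically on U. -/
open scoped ContDiff

noncomputable section

lemma pd_def {n : ℕ} (i : Fin n) (g : (Fin n → ℝ) → ℝ) (x : Fin n → ℝ) :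
    fderiv ℝ g x (Pi.single i 1) = pd i g x := rfl

lemma pd_contDiffAt {f : (Fin 4 → ℝ) → ℝ} {x : Fin 4 → ℝ}
    (hf : ContDiffAt ℝ ∞ f x) (i : Fin 4) : ContDiffAt ℝ ∞ (pd i f) x :=
  (hf.fderiv_right (m := ∞) (by simp)).clm_apply contDiffAt_const

lemma pd_fderiv {f : (Fin 4 → ℝ) → ℝ} {x : Fin 4 → ℝ}
    (hf : ContDiffAt ℝ ∞ f x) (j : Fin 4) (v : Fin 4 → ℝ) :
    fderiv ℝ (pd j f) x v = fderiv ℝ (fderiv ℝ f) x v (Pi.single j 1) := by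
  have h : DifferentiableAt ℝ (fderiv ℝ f) x :=
    (hf.fderiv_right (m := ∞) (by simp)).differentiableAt (by decide)
  show fderiv ℝ (fun y => fderiv ℝ f y (Pi.single j 1)) x v = _
  rw [fderiv_clm_apply h (differentiableAt_const _)]
  simp

lemma pd_swap {f : (Fin 4 → ℝ) → ℝ} {x : Fin 4 → ℝ}
    (hf : ContDiffAt ℝ ∞ f x) (i j : Fin 4) :
    pd i (pd j f) x = pd j (pd i f) x := by
  have hs := hf.isSymmSndFDerivAt (by simp [minSmoothness_of_isRCLikeNormedField]; exact WithTop.coe_le_coe.2 (le_top : (2 : ℕ∞) ≤ ⊤))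
  show fderiv ℝ (pd j f) x (Pi.single i 1) = fderiv ℝ (pd i f) x (Pi.single j 1)
  rw [pd_fderiv hf, pd_fderiv hf]
  exact hs _ _

lemma pd_congr {g h : (Fin 4 → ℝ) → ℝ} {x : Fin 4 → ℝ}
    (hgh : g =ᶠ[nhds x] h) (i : Fin 4) : pd i g x = pd i h x := by
  unfold pd; rw [hgh.fderiv_eq]

/-- the Lax pair of the second heavenly equation
`u₁₃ + u₂₄ + u₁₁u₂₂ − u₁₂² = 0` commutes identically on solutions. -/
theorem statement8 (U : Set (Fin 4 → ℝ)) (hU : IsOpen U)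
    (u : (Fin 4 → ℝ) → ℝ) (hu : ContDiffOn ℝ ∞ u U)
    (hsol : ∀ x ∈ U,
      pd2 0 2 u x + pd2 1 3 u x + pd2 0 0 u x * pd2 1 1 u x - (pd2 0 1 u x) ^ 2 = 0)
    (lam : ℝ)
    (X Y : (Fin 4 → ℝ) → (Fin 4 → ℝ))
    (hX : X = fun x => (Pi.single 3 1 : Fin 4 → ℝ)
        + pd2 0 0 u x • (Pi.single 1 1 : Fin 4 → ℝ)
        - pd2 0 1 u x • (Pi.single 0 1 : Fin 4 → ℝ)
        + lam • (Pi.single 0 1 : Fin 4 → ℝ))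
    (hY : Y = fun x => (Pi.single 2 1 : Fin 4 → ℝ)
        + pd2 1 1 u x • (Pi.single 0 1 : Fin 4 → ℝ)
        - pd2 0 1 u x • (Pi.single 1 1 : Fin 4 → ℝ)
        - lam • (Pi.single 1 1 : Fin 4 → ℝ)) :
    ∀ x ∈ U, lieBr X Y x = 0 := by
  intro x hx
  have hux : ContDiffAt ℝ ∞ u x := hu.contDiffAt (hU.mem_nhds hx)
  have hev : ∀ᶠ y in nhds x, y ∈ U := hU.eventually_mem hx
  have hC : ∀ᶠ y in nhds x, ContDiffAt ℝ ∞ u y :=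
    hev.mono fun y hy => hu.contDiffAt (hU.mem_nhds hy)
  -- differentiability of the second partials
  have dA : DifferentiableAt ℝ (pd 0 (pd 0 u)) x :=
    (pd_contDiffAt (pd_contDiffAt hux 0) 0).differentiableAt (by decide)
  have dB : DifferentiableAt ℝ (pd 0 (pd 1 u)) x :=
    (pd_contDiffAt (pd_contDiffAt hux 1) 0).differentiableAt (by decide)
  have dCc : DifferentiableAt ℝ (pd 1 (pd 1 u)) x :=
    (pd_contDiffAt (pd_contDiffAt hux 1) 1).differentiableAt (by decide)
  have dA2 : DifferentiableAt ℝ (pd 0 (pd 2 u)) x :=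
    (pd_contDiffAt (pd_contDiffAt hux 2) 0).differentiableAt (by decide)
  have dB2 : DifferentiableAt ℝ (pd 1 (pd 3 u)) x :=
    (pd_contDiffAt (pd_contDiffAt hux 3) 1).differentiableAt (by decide)
  -- derivative of the vector fields
  have hXd : HasFDerivAt X
      ((fderiv ℝ (pd 0 (pd 0 u)) x).smulRight (Pi.single 1 1 : Fin 4 → ℝ)
        - (fderiv ℝ (pd 0 (pd 1 u)) x).smulRight (Pi.single 0 1 : Fin 4 → ℝ)) x := by
    rw [hX]
    exact (((dA.hasFDerivAt.smul_const _).const_add _).sub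
      (dB.hasFDerivAt.smul_const _)).add_const _
  have hYd : HasFDerivAt Y
      ((fderiv ℝ (pd 1 (pd 1 u)) x).smulRight (Pi.single 0 1 : Fin 4 → ℝ)
        - (fderiv ℝ (pd 0 (pd 1 u)) x).smulRight (Pi.single 1 1 : Fin 4 → ℝ)) x := by
    rw [hY]
    exact (((dCc.hasFDerivAt.smul_const _).const_add _).sub
      (dB.hasFDerivAt.smul_const _)).sub_const _
  -- the differentiated PDE
  have hFd : HasFDerivAt
      (fun y => pd 0 (pd 2 u) y + pd 1 (pd 3 u) y
        + pd 0 (pd 0 u) y * pd 1 (pd 1 u) y - pd 0 (pd 1 u) y * pd 0 (pd 1 u) y)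
      ((fderiv ℝ (pd 0 (pd 2 u)) x + fderiv ℝ (pd 1 (pd 3 u)) x
        + (pd 0 (pd 0 u) x • fderiv ℝ (pd 1 (pd 1 u)) x
           + pd 1 (pd 1 u) x • fderiv ℝ (pd 0 (pd 0 u)) x))
        - (pd 0 (pd 1 u) x • fderiv ℝ (pd 0 (pd 1 u)) x
           + pd 0 (pd 1 u) x • fderiv ℝ (pd 0 (pd 1 u)) x)) x :=
    ((dA2.hasFDerivAt.add dB2.hasFDerivAt).add
      (dA.hasFDerivAt.mul dCc.hasFDerivAt)).sub (dB.hasFDerivAt.mul dB.hasFDerivAt)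
  have hF0 : (fun y => pd 0 (pd 2 u) y + pd 1 (pd 3 u) y
        + pd 0 (pd 0 u) y * pd 1 (pd 1 u) y - pd 0 (pd 1 u) y * pd 0 (pd 1 u) y)
      =ᶠ[nhds x] (fun _ => (0 : ℝ)) := by
    filter_upwards [hev] with y hy
    have h := hsol y hy
    simp only [pd2] at h
    linear_combination h
  have hD0 : (fderiv ℝ (pd 0 (pd 2 u)) x + fderiv ℝ (pd 1 (pd 3 u)) x
        + (pd 0 (pd 0 u) x • fderiv ℝ (pd 1 (pd 1 u)) x
           + pd 1 (pd 1 u) x • fderiv ℝ (pd 0 (pd 0 u)) x))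
        - (pd 0 (pd 1 u) x • fderiv ℝ (pd 0 (pd 1 u)) x
           + pd 0 (pd 1 u) x • fderiv ℝ (pd 0 (pd 1 u)) x) = 0 := by
    rw [← hFd.fderiv, hF0.fderiv_eq]
    exact fderiv_const_apply 0
  have hP1 := congrArg (fun (L : (Fin 4 → ℝ) →L[ℝ] ℝ) => L (Pi.single 1 1)) hD0
  have hP0 := congrArg (fun (L : (Fin 4 → ℝ) →L[ℝ] ℝ) => L (Pi.single 0 1)) hD0
  simp only [ContinuousLinearMap.add_apply, ContinuousLinearMap.sub_apply,
    ContinuousLinearMap.coe_smul', Pi.smul_apply, smul_eq_mul,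
    ContinuousLinearMap.zero_apply, pd_def] at hP1 hP0
  -- symmetry of third derivatives
  have e01 : pd 0 (pd 1 u) =ᶠ[nhds x] pd 1 (pd 0 u) :=
    hC.mono fun y hy => pd_swap hy 0 1
  have e13 : pd 3 (pd 1 u) =ᶠ[nhds x] pd 1 (pd 3 u) :=
    hC.mono fun y hy => pd_swap hy 3 1
  have e12 : pd 2 (pd 1 u) =ᶠ[nhds x] pd 1 (pd 2 u) :=
    hC.mono fun y hy => pd_swap hy 2 1
  have e02 : pd 2 (pd 0 u) =ᶠ[nhds x] pd 0 (pd 2 u) :=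
    hC.mono fun y hy => pd_swap hy 2 0
  have hS1 : pd 0 (pd 1 (pd 1 u)) x = pd 1 (pd 0 (pd 1 u)) x :=
    pd_swap (pd_contDiffAt hux 1) 0 1
  have hS2 : pd 3 (pd 1 (pd 1 u)) x = pd 1 (pd 1 (pd 3 u)) x :=
    (pd_swap (pd_contDiffAt hux 1) 3 1).trans (pd_congr e13 1)
  have hS3 : pd 0 (pd 0 (pd 1 u)) x = pd 1 (pd 0 (pd 0 u)) x :=
    (pd_congr e01 0).trans (pd_swap (pd_contDiffAt hux 0) 0 1)
  have hS4 : pd 2 (pd 0 (pd 1 u)) x = pd 1 (pd 0 (pd 2 u)) x :=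
    ((pd_swap (pd_contDiffAt hux 1) 2 0).trans (pd_congr e12 0)).trans
      (pd_swap (pd_contDiffAt hux 2) 0 1)
  have hS5 : pd 3 (pd 0 (pd 1 u)) x = pd 0 (pd 1 (pd 3 u)) x :=
    (pd_swap (pd_contDiffAt hux 1) 3 0).trans (pd_congr e13 0)
  have hS6 : pd 2 (pd 0 (pd 0 u)) x = pd 0 (pd 0 (pd 2 u)) x :=
    (pd_swap (pd_contDiffAt hux 0) 2 0).trans (pd_congr e02 0)
  -- now compute the bracket
  unfold lieBr
  rw [hXd.fderiv, hYd.fderiv, hX, hY]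
  simp only [pd2, ContinuousLinearMap.sub_apply, ContinuousLinearMap.smulRight_apply,
    map_add, map_sub, map_smul, smul_eq_mul, pd_def]
  funext i
  simp only [Pi.sub_apply, Pi.add_apply, Pi.smul_apply, Pi.zero_apply, smul_eq_mul,
    Pi.single_apply]
  fin_cases i
  · simp
    linear_combination hP1 + (lam - pd 0 (pd 1 u) x) * hS1 + hS2 + pd 1 (pd 1 u) x * hS3 + hS4
  · simp
    linear_combination -hP0 - hS5 - hS6 - (lam + pd 0 (pd 1 u) x) * hS3 + pd 0 (pd 0 u) x * hS1
  · simp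
  · simp
end
end

section
/- Let U ⊆ ℝ⁴ be open with x₃ ≠ 0 for all x ∈ U, and let u : U → ℝ be a smooth solution of the equation u₁₃ + u₂₄ + x₃(u₁₁u₂₂ − u₁₂²) = 0 on U. For λ ∈ ℝ define the vector fields X = ∂₄ + x₃(u₁₁∂₂ − u₁₂∂₁) + ((λ−x₂)/x₃)∂₁ and Y = ∂₃ + x₃(u₂₂∂₁ − u₁₂∂₂) − ((λ−x₂)/x₃)∂₂. Then for every λ ∈ ℝ and every x ∈ U, the vector [X,Y](x) lies in the linear span of X(x) and Y(x). -/
open scoped ContDiff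

noncomputable section

section Aux


variable {n : ℕ} {f g : (Fin n → ℝ) → ℝ} {x : Fin n → ℝ}

lemma contDiffAt_pd (hf : ContDiffAt ℝ ∞ f x) (i : Fin n) :
    ContDiffAt ℝ ∞ (pd i f) x := by
  have h1 : ContDiffAt ℝ ∞ (fderiv ℝ f) x := hf.fderiv_right (by simp)
  exact h1.clm_apply contDiffAt_const

lemma differentiableAt_pd (hf : ContDiffAt ℝ ∞ f x) (i : Fin n) :
    DifferentiableAt ℝ (pd i f) x :=
  (contDiffAt_pd hf i).differentiableAt (by simp)

lemma clm_ev (L : (Fin 4 → ℝ) →L[ℝ] ℝ) (v : Fin 4 → ℝ) :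
    L v = v 0 * L (Pi.single 0 1) + v 1 * L (Pi.single 1 1) + v 2 * L (Pi.single 2 1)
      + v 3 * L (Pi.single 3 1) := by
  have hv : v = v 0 • (Pi.single 0 1 : Fin 4 → ℝ) + v 1 • (Pi.single 1 1 : Fin 4 → ℝ)
      + v 2 • (Pi.single 2 1 : Fin 4 → ℝ) + v 3 • (Pi.single 3 1 : Fin 4 → ℝ) := by
    funext i; fin_cases i <;> simp [Pi.single_apply]
  conv_lhs => rw [hv]
  simp [map_add, map_smul]

lemma fderiv_ev {f : (Fin 4 → ℝ) → ℝ} {x : Fin 4 → ℝ} (v : Fin 4 → ℝ) :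
    fderiv ℝ f x v = v 0 * pd 0 f x + v 1 * pd 1 f x + v 2 * pd 2 f x + v 3 * pd 3 f x :=
  clm_ev _ v

lemma pd_congr_nhds (h : f =ᶠ[nhds x] g) (i : Fin n) : pd i f x = pd i g x := by
  unfold pd; rw [h.fderiv_eq]

lemma pd_add (hf : DifferentiableAt ℝ f x) (hg : DifferentiableAt ℝ g x) (i : Fin n) :
    pd i (fun y => f y + g y) x = pd i f x + pd i g x := by
  unfold pd; rw [fderiv_fun_add hf hg]; simp

lemma pd_sub (hf : DifferentiableAt ℝ f x) (hg : DifferentiableAt ℝ g x) (i : Fin n) :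
    pd i (fun y => f y - g y) x = pd i f x - pd i g x := by
  unfold pd; rw [fderiv_fun_sub hf hg]; simp

lemma pd_neg (hf : DifferentiableAt ℝ f x) (i : Fin n) :
    pd i (fun y => -(f y)) x = -pd i f x := by
  unfold pd; rw [fderiv_fun_neg]; simp

lemma pd_mul (hf : DifferentiableAt ℝ f x) (hg : DifferentiableAt ℝ g x) (i : Fin n) :
    pd i (fun y => f y * g y) x = pd i f x * g x + f x * pd i g x := by
  unfold pd; rw [fderiv_fun_mul hf hg]; simp; ring

lemma pd_const (c : ℝ) (i : Fin n) : pd i (fun _ => c) x = 0 := by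
  unfold pd; rw [fderiv_fun_const]; simp

lemma differentiableAt_coord (k : Fin n) : DifferentiableAt ℝ (fun y : Fin n → ℝ => y k) x :=
  (ContinuousLinearMap.proj k : (Fin n → ℝ) →L[ℝ] ℝ).differentiableAt

lemma pd_coord (k i : Fin n) : pd i (fun y : Fin n → ℝ => y k) x = if k = i then 1 else 0 := by
  unfold pd
  rw [show (fun y : Fin n → ℝ => y k) = (ContinuousLinearMap.proj k : (Fin n → ℝ) →L[ℝ] ℝ) from rfl,
    ContinuousLinearMap.fderiv]
  simp [Pi.single_apply]

lemma differentiableAt_invcoord (k : Fin n) (h : x k ≠ 0) :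
    DifferentiableAt ℝ (fun y : Fin n → ℝ => (y k)⁻¹) x :=
  (differentiableAt_inv h).comp x (differentiableAt_coord k)

lemma pd_invcoord (k i : Fin n) (h : x k ≠ 0) :
    pd i (fun y : Fin n → ℝ => (y k)⁻¹) x = -(if k = i then 1 else 0) * ((x k) ^ 2)⁻¹ := by
  unfold pd
  have h1 : HasFDerivAt (fun y : Fin n → ℝ => (y k)⁻¹)
      ((-ContinuousLinearMap.mulLeftRight ℝ ℝ (x k)⁻¹ (x k)⁻¹).comp
        (ContinuousLinearMap.proj k)) x :=
    (hasFDerivAt_inv' h).comp x (ContinuousLinearMap.proj k :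
      (Fin n → ℝ) →L[ℝ] ℝ).hasFDerivAt
  rw [h1.fderiv]
  simp [Pi.single_apply, ContinuousLinearMap.mulLeftRight_apply]
  by_cases hk : k = i <;> simp [hk] <;> ring_nf <;> field_simp [hk]

lemma pd_pd_symm (hf : ContDiffAt ℝ ∞ f x) (i j : Fin n) :
    pd i (pd j f) x = pd j (pd i f) x := by
  have hsymm : IsSymmSndFDerivAt ℝ f x := hf.isSymmSndFDerivAt (by simp [minSmoothness_of_isRCLikeNormedField]; exact WithTop.coe_le_coe.2 le_top)
  have hd : DifferentiableAt ℝ (fderiv ℝ f) x :=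
    (hf.fderiv_right (m := ∞) (by simp)).differentiableAt (by simp)
  have key : ∀ w v : Fin n → ℝ,
      fderiv ℝ (fun y => fderiv ℝ f y w) x v = fderiv ℝ (fderiv ℝ f) x v w := by
    intro w v
    rw [fderiv_clm_apply hd (differentiableAt_const w)]
    simp
  calc pd i (pd j f) x = fderiv ℝ (fderiv ℝ f) x (Pi.single i 1) (Pi.single j 1) :=
        key _ _
    _ = fderiv ℝ (fderiv ℝ f) x (Pi.single j 1) (Pi.single i 1) := hsymm.eq _ _
    _ = pd j (pd i f) x := (key _ _).symm

end Aux

/-- Lax pair (Frobenius integrability) for the deformed second heavenly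
equation with `f = x₃`, for every value of the spectral parameter `λ`. -/
theorem statement11 (U : Set (Fin 4 → ℝ)) (hU : IsOpen U)
    (hU3 : ∀ x ∈ U, x 2 ≠ 0)
    (u : (Fin 4 → ℝ) → ℝ) (hu : ContDiffOn ℝ ∞ u U)
    (hsol : ∀ x ∈ U,
      pd2 0 2 u x + pd2 1 3 u x
        + x 2 * (pd2 0 0 u x * pd2 1 1 u x - (pd2 0 1 u x) ^ 2) = 0)
    (X Y : ℝ → (Fin 4 → ℝ) → (Fin 4 → ℝ))
    (hX : X = fun lam x => (Pi.single 3 1 : Fin 4 → ℝ)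
        + (x 2 * pd2 0 0 u x) • (Pi.single 1 1 : Fin 4 → ℝ)
        - (x 2 * pd2 0 1 u x) • (Pi.single 0 1 : Fin 4 → ℝ)
        + ((lam - x 1) / x 2) • (Pi.single 0 1 : Fin 4 → ℝ))
    (hY : Y = fun lam x => (Pi.single 2 1 : Fin 4 → ℝ)
        + (x 2 * pd2 1 1 u x) • (Pi.single 0 1 : Fin 4 → ℝ)
        - (x 2 * pd2 0 1 u x) • (Pi.single 1 1 : Fin 4 → ℝ)
        - ((lam - x 1) / x 2) • (Pi.single 1 1 : Fin 4 → ℝ)) :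
    ∀ lam : ℝ, ∀ x ∈ U,
      lieBr (X lam) (Y lam) x ∈ Submodule.span ℝ {X lam x, Y lam x} := by
  intro lam x hx
  have hx2 : x 2 ≠ 0 := hU3 x hx
  have hUx : U ∈ nhds x := hU.mem_nhds hx
  have hCu : ∀ y ∈ U, ContDiffAt ℝ ∞ u y := fun y hy => hu.contDiffAt (hU.mem_nhds hy)
  -- differentiability of second derivatives at x
  have dP : ∀ a b : Fin 4, DifferentiableAt ℝ (pd a (pd b u)) x := fun a b =>
    differentiableAt_pd (contDiffAt_pd (hCu x hx) b) a
  -- component functions of X and Y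
  have hX0 : (fun y => X lam y 0) =
      fun y => (lam - y 1) * (y 2)⁻¹ - y 2 * pd 0 (pd 1 u) y := by
    funext y
    simp [hX, pd2, Pi.single_apply, div_eq_mul_inv]
    ring
  have hX1 : (fun y => X lam y 1) = fun y => y 2 * pd 0 (pd 0 u) y := by
    funext y; simp [hX, pd2, Pi.single_apply]
  have hX2 : (fun y => X lam y 2) = fun _ => (0:ℝ) := by
    funext y; simp [hX, pd2, Pi.single_apply]
  have hX3 : (fun y => X lam y 3) = fun _ => (1:ℝ) := by
    funext y; simp [hX, pd2, Pi.single_apply]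
  have hY0 : (fun y => Y lam y 0) = fun y => y 2 * pd 1 (pd 1 u) y := by
    funext y; simp [hY, pd2, Pi.single_apply]
  have hY1 : (fun y => Y lam y 1) =
      fun y => -(y 2 * pd 0 (pd 1 u) y) - (lam - y 1) * (y 2)⁻¹ := by
    funext y
    simp [hY, pd2, Pi.single_apply, div_eq_mul_inv]
  have hY2 : (fun y => Y lam y 2) = fun _ => (1:ℝ) := by
    funext y; simp [hY, pd2, Pi.single_apply]
  have hY3 : (fun y => Y lam y 3) = fun _ => (0:ℝ) := by
    funext y; simp [hY, pd2, Pi.single_apply]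
  -- differentiability of the components
  have dM : DifferentiableAt ℝ (fun y : Fin 4 → ℝ => (lam - y 1) * (y 2)⁻¹) x :=
    ((differentiableAt_const lam).sub (differentiableAt_coord 1)).mul
      (differentiableAt_invcoord 2 hx2)
  have dX0 : DifferentiableAt ℝ (fun y => (lam - y 1) * (y 2)⁻¹ - y 2 * pd 0 (pd 1 u) y) x :=
    dM.sub ((differentiableAt_coord 2).mul (dP 0 1))
  have dX1 : DifferentiableAt ℝ (fun y => y 2 * pd 0 (pd 0 u) y) x :=
    (differentiableAt_coord 2).mul (dP 0 0)
  have dY0 : DifferentiableAt ℝ (fun y => y 2 * pd 1 (pd 1 u) y) x :=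
    (differentiableAt_coord 2).mul (dP 1 1)
  have dY1 : DifferentiableAt ℝ
      (fun y => -(y 2 * pd 0 (pd 1 u) y) - (lam - y 1) * (y 2)⁻¹) x :=
    ((differentiableAt_coord 2).mul (dP 0 1)).neg.sub dM
  have hdX : DifferentiableAt ℝ (X lam) x := by
    apply differentiableAt_pi.2
    intro i
    fin_cases i
    · show DifferentiableAt ℝ (fun y => X lam y 0) x
      rw [hX0]; exact dX0
    · show DifferentiableAt ℝ (fun y => X lam y 1) x
      rw [hX1]; exact dX1
    · show DifferentiableAt ℝ (fun y => X lam y 2) x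
      rw [hX2]; exact differentiableAt_const _
    · show DifferentiableAt ℝ (fun y => X lam y 3) x
      rw [hX3]; exact differentiableAt_const _
  have hdY : DifferentiableAt ℝ (Y lam) x := by
    apply differentiableAt_pi.2
    intro i
    fin_cases i
    · show DifferentiableAt ℝ (fun y => Y lam y 0) x
      rw [hY0]; exact dY0
    · show DifferentiableAt ℝ (fun y => Y lam y 1) x
      rw [hY1]; exact dY1
    · show DifferentiableAt ℝ (fun y => Y lam y 2) x
      rw [hY2]; exact differentiableAt_const _
    · show DifferentiableAt ℝ (fun y => Y lam y 3) x
      rw [hY3]; exact differentiableAt_const _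
  -- third-derivative symmetries
  have hsort : ∀ a b c : Fin 4, pd a (pd b (pd c u)) x = pd b (pd a (pd c u)) x :=
    fun a b c => pd_pd_symm (contDiffAt_pd (hCu x hx) c) a b
  have hswap_in : ∀ a b c : Fin 4, pd a (pd b (pd c u)) x = pd a (pd c (pd b u)) x := by
    intro a b c
    apply pd_congr_nhds
    filter_upwards [hUx] with y hy
    exact pd_pd_symm (hCu y hy) b c
  have c1 : pd 3 (pd 1 (pd 1 u)) x = pd 1 (pd 1 (pd 3 u)) x := by
    rw [hsort 3 1 1]; exact hswap_in 1 3 1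
  have c2 : pd 2 (pd 0 (pd 1 u)) x = pd 0 (pd 1 (pd 2 u)) x := by
    rw [hsort 2 0 1]; exact hswap_in 0 2 1
  have c3 : pd 1 (pd 0 (pd 1 u)) x = pd 0 (pd 1 (pd 1 u)) x := hsort 1 0 1
  have c4 : pd 1 (pd 0 (pd 0 u)) x = pd 0 (pd 0 (pd 1 u)) x := by
    rw [hsort 1 0 0]; exact hswap_in 0 1 0
  have c5 : pd 3 (pd 0 (pd 1 u)) x = pd 0 (pd 1 (pd 3 u)) x := by
    rw [hsort 3 0 1]; exact hswap_in 0 3 1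
  have c6 : pd 2 (pd 0 (pd 0 u)) x = pd 0 (pd 0 (pd 2 u)) x := by
    rw [hsort 2 0 0]; exact hswap_in 0 2 0
  have c8 : pd 1 (pd 0 (pd 2 u)) x = pd 0 (pd 1 (pd 2 u)) x := hsort 1 0 2
  -- differentiated PDE
  have dG : DifferentiableAt ℝ (fun y => pd 0 (pd 0 u) y * pd 1 (pd 1 u) y
      - pd 0 (pd 1 u) y * pd 0 (pd 1 u) y) x :=
    ((dP 0 0).mul (dP 1 1)).sub ((dP 0 1).mul (dP 0 1))
  have dC : DifferentiableAt ℝ (fun y => y 2 * (pd 0 (pd 0 u) y * pd 1 (pd 1 u) y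
      - pd 0 (pd 1 u) y * pd 0 (pd 1 u) y)) x := (differentiableAt_coord 2).mul dG
  have hE : ∀ i : Fin 4,
      pd i (pd 0 (pd 2 u)) x + (pd i (pd 1 (pd 3 u)) x
        + ((if (2:Fin 4) = i then (1:ℝ) else 0)
            * (pd 0 (pd 0 u) x * pd 1 (pd 1 u) x - pd 0 (pd 1 u) x * pd 0 (pd 1 u) x)
          + x 2 * ((pd i (pd 0 (pd 0 u)) x * pd 1 (pd 1 u) x
              + pd 0 (pd 0 u) x * pd i (pd 1 (pd 1 u)) x)
            - (pd i (pd 0 (pd 1 u)) x * pd 0 (pd 1 u) x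
              + pd 0 (pd 1 u) x * pd i (pd 0 (pd 1 u)) x)))) = 0 := by
    intro i
    have hFz : (fun y => pd 0 (pd 2 u) y + (pd 1 (pd 3 u) y
        + y 2 * (pd 0 (pd 0 u) y * pd 1 (pd 1 u) y - pd 0 (pd 1 u) y * pd 0 (pd 1 u) y)))
        =ᶠ[nhds x] fun _ => (0:ℝ) := by
      filter_upwards [hUx] with y hy
      have h := hsol y hy
      simp only [pd2] at h
      linear_combination h
    have e1 := pd_congr_nhds hFz i
    rw [pd_const] at e1
    rw [pd_add (dP 0 2) ((dP 1 3).fun_add dC)] at e1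
    rw [pd_add (dP 1 3) dC] at e1
    rw [pd_mul (differentiableAt_coord 2) dG] at e1
    rw [pd_sub ((dP 0 0).fun_mul (dP 1 1)) ((dP 0 1).fun_mul (dP 0 1))] at e1
    rw [pd_mul (dP 0 0) (dP 1 1), pd_mul (dP 0 1) (dP 0 1)] at e1
    rw [pd_coord] at e1
    linear_combination e1
  have hE0 := hE 0
  have hE1 := hE 1
  rw [if_neg (by decide : ¬ ((2:Fin 4) = 0))] at hE0
  rw [if_neg (by decide : ¬ ((2:Fin 4) = 1))] at hE1
  rw [c8, c4, c3] at hE1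
  -- values of the vector fields at x
  have vX0 := congrFun hX0 x
  have vX1 := congrFun hX1 x
  have vX2 := congrFun hX2 x
  have vX3 := congrFun hX3 x
  have vY0 := congrFun hY0 x
  have vY1 := congrFun hY1 x
  have vY2 := congrFun hY2 x
  have vY3 := congrFun hY3 x
  -- partial derivatives of the component functions
  have pdQ : ∀ (a b j : Fin 4), pd j (fun y => y 2 * pd a (pd b u) y) x
      = (if (2:Fin 4) = j then 1 else 0) * pd a (pd b u) x + x 2 * pd j (pd a (pd b u)) x := by
    intro a b j
    rw [pd_mul (differentiableAt_coord 2) (dP a b), pd_coord]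
  have pdM : ∀ j : Fin 4, pd j (fun y => (lam - y 1) * (y 2)⁻¹) x
      = (0 - (if (1:Fin 4) = j then 1 else 0)) * (x 2)⁻¹
        + (lam - x 1) * (-(if (2:Fin 4) = j then 1 else 0) * ((x 2) ^ 2)⁻¹) := by
    intro j
    rw [pd_mul ((differentiableAt_const lam).fun_sub (differentiableAt_coord 1))
      (differentiableAt_invcoord 2 hx2)]
    rw [pd_sub (differentiableAt_const lam) (differentiableAt_coord 1), pd_const, pd_coord,
      pd_invcoord 2 j hx2]
  have pdXc0 : ∀ j : Fin 4,
      pd j (fun y => (lam - y 1) * (y 2)⁻¹ - y 2 * pd 0 (pd 1 u) y) x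
      = pd j (fun y => (lam - y 1) * (y 2)⁻¹) x - pd j (fun y => y 2 * pd 0 (pd 1 u) y) x :=
    fun j => pd_sub dM ((differentiableAt_coord 2).mul (dP 0 1)) j
  have pdYc1 : ∀ j : Fin 4,
      pd j (fun y => -(y 2 * pd 0 (pd 1 u) y) - (lam - y 1) * (y 2)⁻¹) x
      = -(pd j (fun y => y 2 * pd 0 (pd 1 u) y) x) - pd j (fun y => (lam - y 1) * (y 2)⁻¹) x := by
    intro j
    rw [pd_sub ((differentiableAt_coord 2).fun_mul (dP 0 1)).fun_neg dM,
      pd_neg ((differentiableAt_coord 2).fun_mul (dP 0 1))]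
  have hproj : ∀ (F : (Fin 4 → ℝ) → (Fin 4 → ℝ)), DifferentiableAt ℝ F x →
      ∀ (i : Fin 4) (v : Fin 4 → ℝ),
      (fderiv ℝ F x v) i = fderiv ℝ (fun y => F y i) x v := by
    intro F hF i v
    rw [show (fun y => F y i) = (ContinuousLinearMap.proj i : (Fin 4 → ℝ) →L[ℝ] ℝ) ∘ F from rfl,
      fderiv_comp x (ContinuousLinearMap.proj i :
        (Fin 4 → ℝ) →L[ℝ] ℝ).differentiableAt hF, ContinuousLinearMap.fderiv]
    rfl
  have key : lieBr (X lam) (Y lam) x = 0 := by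
    funext i
    simp only [lieBr, Pi.sub_apply, Pi.zero_apply, sub_eq_zero]
    rw [hproj _ hdY i, hproj _ hdX i]
    fin_cases i
    · show fderiv ℝ (fun y => Y lam y 0) x (X lam x) = fderiv ℝ (fun y => X lam y 0) x (Y lam x)
      rw [hY0, hX0]
      rw [fderiv_ev, fderiv_ev]
      simp only [pdXc0, pdQ, pdM, vX0, vX1, vX2, vX3, vY0, vY1, vY2, vY3]
      simp only [Fin.reduceEq, reduceIte]
      norm_num
      simp only [c1, c2, c3, c4, c5, c6, c8]
      field_simp
      linear_combination (x 2) ^ 3 * hE1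
    · show fderiv ℝ (fun y => Y lam y 1) x (X lam x) = fderiv ℝ (fun y => X lam y 1) x (Y lam x)
      rw [hY1, hX1]
      rw [fderiv_ev, fderiv_ev]
      simp only [pdYc1, pdQ, pdM, vX0, vX1, vX2, vX3, vY0, vY1, vY2, vY3]
      simp only [Fin.reduceEq, reduceIte]
      norm_num
      simp only [c1, c2, c3, c4, c5, c6, c8]
      field_simp
      linear_combination (-(x 2)) * hE0
    · show fderiv ℝ (fun y => Y lam y 2) x (X lam x) = fderiv ℝ (fun y => X lam y 2) x (Y lam x)
      rw [hY2, hX2]; simp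
    · show fderiv ℝ (fun y => Y lam y 3) x (X lam x) = fderiv ℝ (fun y => X lam y 3) x (Y lam x)
      rw [hY3, hX3]; simp
  rw [key]
  exact Submodule.zero_mem _
end
end

section
/- Let U ⊆ ℝ⁴ be open and let u : U → ℝ be a smooth solution of the first heavenly equation u₁₃u₂₄ − u₁₄u₂₃ = 1 on U. Then for every λ ∈ ℝ, the vector fields X = u₁₃∂₄ − u₁₄∂₃ + λ∂₁ and Y = u₂₃∂₄ − u₂₄∂₃ + λ∂₂ satisfy [X,Y] = 0 identically on U. -/
open scoped ContDiff

noncomputable section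

lemma one_le_inf_s14 : (1 : WithTop ℕ∞) ≤ ∞ := by
  rw [show ((1:WithTop ℕ∞)) = ((1:ℕ∞) : WithTop ℕ∞) by rfl]; exact_mod_cast le_top

lemma two_le_inf : (2 : WithTop ℕ∞) ≤ ∞ := by
  rw [show ((2:WithTop ℕ∞)) = ((2:ℕ∞) : WithTop ℕ∞) by rfl]; exact_mod_cast le_top

variable {n : ℕ} {U : Set (Fin n → ℝ)}

lemma pd_contDiffOn_s14 (hU : IsOpen U) {f : (Fin n → ℝ) → ℝ}
    (hf : ContDiffOn ℝ ∞ f U) (i : Fin n) : ContDiffOn ℝ ∞ (pd i f) U := by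
  have h1 : ContDiffOn ℝ ∞ (fun x => fderiv ℝ f x) U :=
    hf.fderiv_of_isOpen hU (by simp)
  exact (ContinuousLinearMap.apply ℝ ℝ (Pi.single i 1)).contDiff.comp_contDiffOn h1

lemma pd_diffAt (hU : IsOpen U) {f : (Fin n → ℝ) → ℝ}
    (hf : ContDiffOn ℝ ∞ f U) {x} (hx : x ∈ U) : DifferentiableAt ℝ f x :=
  (hf.contDiffAt (hU.mem_nhds hx)).differentiableAt (by simp)

lemma pd_congr_s14 (hU : IsOpen U) {f g : (Fin n → ℝ) → ℝ}
    (h : ∀ y ∈ U, f y = g y) {x} (hx : x ∈ U) (i : Fin n) : pd i f x = pd i g x := by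
  unfold pd
  rw [Filter.EventuallyEq.fderiv_eq (Filter.eventuallyEq_of_mem (hU.mem_nhds hx) h)]

lemma pd_symm (hU : IsOpen U) {f : (Fin n → ℝ) → ℝ}
    (hf : ContDiffOn ℝ ∞ f U) (i j : Fin n) {x} (hx : x ∈ U) :
    pd i (pd j f) x = pd j (pd i f) x := by
  have hsym : IsSymmSndFDerivAt ℝ f x :=
    (hf.contDiffAt (hU.mem_nhds hx)).isSymmSndFDerivAt (by rw [minSmoothness_of_isRCLikeNormedField]; exact two_le_inf)
  have hdf : DifferentiableAt ℝ (fderiv ℝ f) x :=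
    (((hf.fderiv_of_isOpen (m := ∞) hU (by simp)).contDiffAt
      (hU.mem_nhds hx))).differentiableAt (by simp)
  have key : ∀ k l : Fin n,
      pd k (pd l f) x = fderiv ℝ (fderiv ℝ f) x (Pi.single k 1) (Pi.single l 1) := by
    intro k l
    show fderiv ℝ (fun y => fderiv ℝ f y (Pi.single l 1)) x (Pi.single k 1) = _
    rw [fderiv_clm_apply hdf (differentiableAt_const _)]
    simp
  rw [key, key, hsym]


/-- the Lax pair of the first heavenly equation `u₁₃u₂₄ − u₁₄u₂₃ = 1`
commutes identically on solutions, for every `λ`. -/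
theorem statement14 (U : Set (Fin 4 → ℝ)) (hU : IsOpen U)
    (u : (Fin 4 → ℝ) → ℝ) (hu : ContDiffOn ℝ ∞ u U)
    (hsol : ∀ x ∈ U, pd2 0 2 u x * pd2 1 3 u x - pd2 0 3 u x * pd2 1 2 u x = 1)
    (lam : ℝ)
    (X Y : (Fin 4 → ℝ) → (Fin 4 → ℝ))
    (hX : X = fun x => pd2 0 2 u x • (Pi.single 3 1 : Fin 4 → ℝ)
        - pd2 0 3 u x • (Pi.single 2 1 : Fin 4 → ℝ)
        + lam • (Pi.single 0 1 : Fin 4 → ℝ))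
    (hY : Y = fun x => pd2 1 2 u x • (Pi.single 3 1 : Fin 4 → ℝ)
        - pd2 1 3 u x • (Pi.single 2 1 : Fin 4 → ℝ)
        + lam • (Pi.single 1 1 : Fin 4 → ℝ)) :
    ∀ x ∈ U, lieBr X Y x = 0 := by
  subst hX hY
  intro x hx
  -- smoothness of first and second partials
  have hp : ∀ i : Fin 4, ContDiffOn ℝ ∞ (pd i u) U := fun i => pd_contDiffOn_s14 hU hu i
  have hpp : ∀ i j : Fin 4, ContDiffOn ℝ ∞ (pd2 i j u) U :=
    fun i j => pd_contDiffOn_s14 hU (hp j) i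
  have hd : ∀ i j : Fin 4, DifferentiableAt ℝ (pd2 i j u) x :=
    fun i j => pd_diffAt hU (hpp i j) hx
  -- derivatives of the vector fields
  have hDX : fderiv ℝ (fun y => pd2 0 2 u y • (Pi.single 3 1 : Fin 4 → ℝ)
      - pd2 0 3 u y • (Pi.single 2 1 : Fin 4 → ℝ)
      + lam • (Pi.single 0 1 : Fin 4 → ℝ)) x
      = (fderiv ℝ (pd2 0 2 u) x).smulRight (Pi.single 3 1)
        - (fderiv ℝ (pd2 0 3 u) x).smulRight (Pi.single 2 1) := by
    rw [fderiv_add_const, fderiv_fun_sub ((hd 0 2).smul_const _) ((hd 0 3).smul_const _),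
      fderiv_smul_const (hd 0 2), fderiv_smul_const (hd 0 3)]
  have hDY : fderiv ℝ (fun y => pd2 1 2 u y • (Pi.single 3 1 : Fin 4 → ℝ)
      - pd2 1 3 u y • (Pi.single 2 1 : Fin 4 → ℝ)
      + lam • (Pi.single 1 1 : Fin 4 → ℝ)) x
      = (fderiv ℝ (pd2 1 2 u) x).smulRight (Pi.single 3 1)
        - (fderiv ℝ (pd2 1 3 u) x).smulRight (Pi.single 2 1) := by
    rw [fderiv_add_const, fderiv_fun_sub ((hd 1 2).smul_const _) ((hd 1 3).smul_const _),
      fderiv_smul_const (hd 1 2), fderiv_smul_const (hd 1 3)]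
  -- directional derivatives of second partials in coordinate directions
  have happly : ∀ (i j : Fin 4) (k : Fin 4),
      fderiv ℝ (pd2 i j u) x (Pi.single k 1) = pd k (pd2 i j u) x := fun _ _ _ => rfl
  -- linear expansion of the derivative applied to the vector field values
  have hexp : ∀ (i j : Fin 4) (p q r : ℝ) (a b c : Fin 4),
      fderiv ℝ (pd2 i j u) x (p • (Pi.single a 1 : Fin 4 → ℝ)
        - q • (Pi.single b 1 : Fin 4 → ℝ) + r • (Pi.single c 1 : Fin 4 → ℝ))
      = p * pd a (pd2 i j u) x - q * pd b (pd2 i j u) x + r * pd c (pd2 i j u) x := by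
    intro i j p q r a b c
    rw [map_add, map_sub, map_smul, map_smul, map_smul]
    simp [happly, smul_eq_mul]
  -- symmetry relations
  have s1 : pd 0 (pd2 1 2 u) x = pd 1 (pd2 0 2 u) x := pd_symm hU (hp 2) 0 1 hx
  have s2 : pd 0 (pd2 1 3 u) x = pd 1 (pd2 0 3 u) x := pd_symm hU (hp 3) 0 1 hx
  have s3 : pd 2 (pd2 1 3 u) x = pd 3 (pd2 1 2 u) x := by
    calc pd 2 (pd 1 (pd 3 u)) x = pd 1 (pd 2 (pd 3 u)) x := pd_symm hU (hp 3) 2 1 hx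
    _ = pd 1 (pd 3 (pd 2 u)) x := pd_congr_s14 hU (fun y hy => pd_symm hU hu 2 3 hy) hx 1
    _ = pd 3 (pd 1 (pd 2 u)) x := pd_symm hU (hp 2) 1 3 hx
  have s4 : pd 2 (pd2 0 3 u) x = pd 3 (pd2 0 2 u) x := by
    calc pd 2 (pd 0 (pd 3 u)) x = pd 0 (pd 2 (pd 3 u)) x := pd_symm hU (hp 3) 2 0 hx
    _ = pd 0 (pd 3 (pd 2 u)) x := pd_congr_s14 hU (fun y hy => pd_symm hU hu 2 3 hy) hx 0
    _ = pd 3 (pd 0 (pd 2 u)) x := pd_symm hU (hp 2) 0 3 hx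
  -- the heavenly equation differentiated
  have hg0 : fderiv ℝ (fun y => pd2 0 2 u y * pd2 1 3 u y - pd2 0 3 u y * pd2 1 2 u y) x
      = 0 := by
    have hev : (fun y => pd2 0 2 u y * pd2 1 3 u y - pd2 0 3 u y * pd2 1 2 u y)
        =ᶠ[nhds x] fun _ => (1:ℝ) :=
      Filter.eventuallyEq_of_mem (hU.mem_nhds hx) hsol
    rw [hev.fderiv_eq, fderiv_fun_const]
    rfl
  have hgmul : fderiv ℝ (fun y => pd2 0 2 u y * pd2 1 3 u y - pd2 0 3 u y * pd2 1 2 u y) x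
      = ((pd2 0 2 u x) • fderiv ℝ (pd2 1 3 u) x + (pd2 1 3 u x) • fderiv ℝ (pd2 0 2 u) x)
        - ((pd2 0 3 u x) • fderiv ℝ (pd2 1 2 u) x + (pd2 1 2 u x) • fderiv ℝ (pd2 0 3 u) x) := by
    rw [fderiv_fun_sub ((hd 0 2).fun_mul (hd 1 3)) ((hd 0 3).fun_mul (hd 1 2)),
      fderiv_fun_mul (hd 0 2) (hd 1 3), fderiv_fun_mul (hd 0 3) (hd 1 2)]
  have hg : ∀ k : Fin 4,
      (pd2 0 2 u x) * pd k (pd2 1 3 u) x + (pd2 1 3 u x) * pd k (pd2 0 2 u) x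
        - ((pd2 0 3 u x) * pd k (pd2 1 2 u) x + (pd2 1 2 u x) * pd k (pd2 0 3 u) x) = 0 := by
    intro k
    have h0 := congrArg (fun L : (Fin 4 → ℝ) →L[ℝ] ℝ => L (Pi.single k 1))
      (hgmul.symm.trans hg0)
    simpa [happly, smul_eq_mul] using h0
  -- the two scalar identities
  have key3 : fderiv ℝ (pd2 1 2 u) x
        ((pd2 0 2 u x) • (Pi.single 3 1 : Fin 4 → ℝ) - (pd2 0 3 u x) • (Pi.single 2 1 : Fin 4 → ℝ)
          + lam • (Pi.single 0 1 : Fin 4 → ℝ))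
      = fderiv ℝ (pd2 0 2 u) x
        ((pd2 1 2 u x) • (Pi.single 3 1 : Fin 4 → ℝ) - (pd2 1 3 u x) • (Pi.single 2 1 : Fin 4 → ℝ)
          + lam • (Pi.single 1 1 : Fin 4 → ℝ)) := by
    rw [hexp, hexp]
    linear_combination hg 2 - (pd2 0 2 u x) * s3 + (pd2 1 2 u x) * s4 + lam * s1
  have key2 : fderiv ℝ (pd2 1 3 u) x
        ((pd2 0 2 u x) • (Pi.single 3 1 : Fin 4 → ℝ) - (pd2 0 3 u x) • (Pi.single 2 1 : Fin 4 → ℝ)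
          + lam • (Pi.single 0 1 : Fin 4 → ℝ))
      = fderiv ℝ (pd2 0 3 u) x
        ((pd2 1 2 u x) • (Pi.single 3 1 : Fin 4 → ℝ) - (pd2 1 3 u x) • (Pi.single 2 1 : Fin 4 → ℝ)
          + lam • (Pi.single 1 1 : Fin 4 → ℝ)) := by
    rw [hexp, hexp]
    linear_combination hg 3 + lam * s2 - (pd2 0 3 u x) * s3 + (pd2 1 3 u x) * s4
  -- put it together
  unfold lieBr
  rw [hDX, hDY]
  simp only [ContinuousLinearMap.sub_apply, ContinuousLinearMap.smulRight_apply]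
  rw [key3, key2]
  abel
end
end

section
/- Let U ⊆ ℝ⁴ be open and let u : U → ℝ be a smooth solution of the equation u₁₃u₂₄ − u₁₄u₂₃ = u₁ on U. For λ ∈ ℝ define the vector fields X = u₁₃∂₄ − u₁₄∂₃ + (λ−x₂)∂₁ and Y = u₂₃∂₄ − u₂₄∂₃ + (λ−x₂)∂₂. Then for every λ ∈ ℝ and every x ∈ U, the vector [X,Y](x) lies in the linear span of X(x) and Y(x). -/
open scoped ContDiff

noncomputable section

lemma pd_cda {n : ℕ} {f : (Fin n → ℝ) → ℝ} {x} (hf : ContDiffAt ℝ ∞ f x) (j : Fin n) :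
    ContDiffAt ℝ ∞ (pd j f) x :=
  (hf.fderiv_right (m := ∞) (by simp)).clm_apply contDiffAt_const

lemma fderiv_pd_apply {n : ℕ} {f : (Fin n → ℝ) → ℝ} {x} (hf : ContDiffAt ℝ ∞ f x) (j : Fin n)
    (v : Fin n → ℝ) :
    fderiv ℝ (pd j f) x v = fderiv ℝ (fderiv ℝ f) x v (Pi.single j 1) := by
  have hd : DifferentiableAt ℝ (fderiv ℝ f) x :=
    (hf.fderiv_right (m := ∞) (by simp)).differentiableAt (by simp)
  unfold pd
  rw [fderiv_clm_apply hd (differentiableAt_const _)]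
  simp

lemma snd_symm {n : ℕ} {f : (Fin n → ℝ) → ℝ} {x} (hf : ContDiffAt ℝ ∞ f x) (i j : Fin n) :
    fderiv ℝ (pd j f) x (Pi.single i 1) = fderiv ℝ (pd i f) x (Pi.single j 1) := by
  rw [fderiv_pd_apply hf, fderiv_pd_apply hf]
  exact hf.isSymmSndFDerivAt (by
    rw [minSmoothness_of_isRCLikeNormedField]
    rw [show ((2:WithTop ℕ∞)) = ((2:ℕ∞) : WithTop ℕ∞) by norm_cast]
    exact WithTop.coe_le_coe.mpr le_top) _ _

/-- Lax pair (Frobenius integrability) for the first-heavenly-type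
equation with `f = u₁`, for every value of the spectral parameter `λ`. -/
theorem statement15 (U : Set (Fin 4 → ℝ)) (hU : IsOpen U)
    (u : (Fin 4 → ℝ) → ℝ) (hu : ContDiffOn ℝ ∞ u U)
    (hsol : ∀ x ∈ U, pd2 0 2 u x * pd2 1 3 u x - pd2 0 3 u x * pd2 1 2 u x = pd 0 u x)
    (X Y : ℝ → (Fin 4 → ℝ) → (Fin 4 → ℝ))
    (hX : X = fun lam x => pd2 0 2 u x • (Pi.single 3 1 : Fin 4 → ℝ)
        - pd2 0 3 u x • (Pi.single 2 1 : Fin 4 → ℝ)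
        + (lam - x 1) • (Pi.single 0 1 : Fin 4 → ℝ))
    (hY : Y = fun lam x => pd2 1 2 u x • (Pi.single 3 1 : Fin 4 → ℝ)
        - pd2 1 3 u x • (Pi.single 2 1 : Fin 4 → ℝ)
        + (lam - x 1) • (Pi.single 1 1 : Fin 4 → ℝ)) :
    ∀ lam : ℝ, ∀ x ∈ U,
      lieBr (X lam) (Y lam) x ∈ Submodule.span ℝ {X lam x, Y lam x} := by
  intro lam x hx
  have hxU : U ∈ nhds x := hU.mem_nhds hx
  have huAt : ∀ y ∈ U, ContDiffAt ℝ ∞ u y := fun y hy => hu.contDiffAt (hU.mem_nhds hy)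
  have hcda1 : ∀ (j : Fin 4), ∀ y ∈ U, ContDiffAt ℝ ∞ (pd j u) y :=
    fun j y hy => pd_cda (huAt y hy) j
  have hdiff2 : ∀ (i j : Fin 4), DifferentiableAt ℝ (pd2 i j u) x :=
    fun i j => (pd_cda (hcda1 j x hx) i).differentiableAt (by simp)
  -- third derivatives
  set D : Fin 4 → Fin 4 → Fin 4 → ℝ :=
    fun i j k => fderiv ℝ (pd2 j k u) x (Pi.single i 1) with hD
  have hsw1 : ∀ i j k : Fin 4, D i j k = D j i k := fun i j k =>
    snd_symm (hcda1 k x hx) i j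
  have hptw : ∀ y ∈ U, ∀ j k : Fin 4, pd2 j k u y = pd2 k j u y := fun y hy j k =>
    snd_symm (huAt y hy) j k
  have hsw2 : ∀ i j k : Fin 4, D i j k = D i k j := by
    intro i j k
    have hev : pd2 j k u =ᶠ[nhds x] pd2 k j u := by
      filter_upwards [hxU] with y hy; exact hptw y hy j k
    simp only [hD]
    rw [hev.fderiv_eq]
  -- derivative of the PDE
  have hPDE : ∀ k : Fin 4,
      pd2 0 2 u x * D k 1 3 + pd2 1 3 u x * D k 0 2
        - (pd2 0 3 u x * D k 1 2 + pd2 1 2 u x * D k 0 3)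
        = fderiv ℝ (pd 0 u) x (Pi.single k 1) := by
    intro k
    have hev : (fun y => pd2 0 2 u y * pd2 1 3 u y - pd2 0 3 u y * pd2 1 2 u y)
        =ᶠ[nhds x] pd 0 u := by
      filter_upwards [hxU] with y hy; exact hsol y hy
    have hPd : HasFDerivAt (fun y => pd2 0 2 u y * pd2 1 3 u y - pd2 0 3 u y * pd2 1 2 u y)
        (pd2 0 2 u x • fderiv ℝ (pd2 1 3 u) x + pd2 1 3 u x • fderiv ℝ (pd2 0 2 u) x
          - (pd2 0 3 u x • fderiv ℝ (pd2 1 2 u) x + pd2 1 2 u x • fderiv ℝ (pd2 0 3 u) x)) x :=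
      ((hdiff2 0 2).hasFDerivAt.mul (hdiff2 1 3).hasFDerivAt).sub
        ((hdiff2 0 3).hasFDerivAt.mul (hdiff2 1 2).hasFDerivAt)
    have h := hPd.fderiv.symm.trans hev.fderiv_eq
    have h2 := congrArg (fun L : (Fin 4 → ℝ) →L[ℝ] ℝ => L (Pi.single k 1)) h
    simpa [hD, smul_eq_mul] using h2
  have hS2 : fderiv ℝ (pd 0 u) x (Pi.single 2 1) = pd2 0 2 u x := hptw x hx 2 0
  have hS3 : fderiv ℝ (pd 0 u) x (Pi.single 3 1) = pd2 0 3 u x := hptw x hx 3 0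
  -- derivatives of the vector fields
  have hXd : HasFDerivAt (X lam)
      ((fderiv ℝ (pd2 0 2 u) x).smulRight (Pi.single 3 1 : Fin 4 → ℝ)
        - (fderiv ℝ (pd2 0 3 u) x).smulRight (Pi.single 2 1 : Fin 4 → ℝ)
        + ((0 : (Fin 4 → ℝ) →L[ℝ] ℝ)
            - (ContinuousLinearMap.proj 1 : (Fin 4 → ℝ) →L[ℝ] ℝ)).smulRight
              (Pi.single 0 1 : Fin 4 → ℝ)) x := by
    rw [hX]
    have hproj : HasFDerivAt (fun y : Fin 4 → ℝ => lam - y 1)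
        ((0 : (Fin 4 → ℝ) →L[ℝ] ℝ) - (ContinuousLinearMap.proj 1 : (Fin 4 → ℝ) →L[ℝ] ℝ)) x :=
      (hasFDerivAt_const lam x).sub
        ((ContinuousLinearMap.proj 1 : (Fin 4 → ℝ) →L[ℝ] ℝ).hasFDerivAt)
    exact (((hdiff2 0 2).hasFDerivAt.smul_const _).sub
        ((hdiff2 0 3).hasFDerivAt.smul_const _)).add
      (hproj.smul_const (Pi.single 0 1 : Fin 4 → ℝ))
  have hYd : HasFDerivAt (Y lam)
      ((fderiv ℝ (pd2 1 2 u) x).smulRight (Pi.single 3 1 : Fin 4 → ℝ)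
        - (fderiv ℝ (pd2 1 3 u) x).smulRight (Pi.single 2 1 : Fin 4 → ℝ)
        + ((0 : (Fin 4 → ℝ) →L[ℝ] ℝ)
            - (ContinuousLinearMap.proj 1 : (Fin 4 → ℝ) →L[ℝ] ℝ)).smulRight
              (Pi.single 1 1 : Fin 4 → ℝ)) x := by
    rw [hY]
    have hproj : HasFDerivAt (fun y : Fin 4 → ℝ => lam - y 1)
        ((0 : (Fin 4 → ℝ) →L[ℝ] ℝ) - (ContinuousLinearMap.proj 1 : (Fin 4 → ℝ) →L[ℝ] ℝ)) x :=
      (hasFDerivAt_const lam x).sub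
        ((ContinuousLinearMap.proj 1 : (Fin 4 → ℝ) →L[ℝ] ℝ).hasFDerivAt)
    exact (((hdiff2 1 2).hasFDerivAt.smul_const _).sub
        ((hdiff2 1 3).hasFDerivAt.smul_const _)).add
      (hproj.smul_const (Pi.single 1 1 : Fin 4 → ℝ))
  -- scalar identities
  have hfold : ∀ i j k : Fin 4, fderiv ℝ (pd2 j k u) x (Pi.single i 1) = D i j k :=
    fun _ _ _ => rfl
  have key3 : fderiv ℝ (pd2 1 2 u) x (X lam x) - fderiv ℝ (pd2 0 2 u) x (Y lam x)
      = pd2 0 2 u x := by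
    have h := (hPDE 2).trans hS2
    rw [show D 2 0 3 = D 3 0 2 by rw [hsw1 2 0 3, hsw2 0 2 3, hsw1 0 3 2]] at h
    rw [hX, hY]
    simp only [map_add, map_sub, map_smul, smul_eq_mul, hfold]
    rw [show D 3 1 2 = D 2 1 3 by rw [hsw1 3 1 2, hsw2 1 3 2, hsw1 1 2 3],
        show D 0 1 2 = D 1 0 2 by rw [hsw1 0 1 2]]
    linarith [h]
  have key2 : fderiv ℝ (pd2 1 3 u) x (X lam x) - fderiv ℝ (pd2 0 3 u) x (Y lam x)
      = pd2 0 3 u x := by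
    have h := (hPDE 3).trans hS3
    rw [show D 3 0 2 = D 2 0 3 by rw [hsw1 3 0 2, hsw2 0 3 2, hsw1 0 2 3]] at h
    rw [hX, hY]
    simp only [map_add, map_sub, map_smul, smul_eq_mul, hfold]
    rw [show D 2 1 3 = D 3 1 2 by rw [hsw1 2 1 3, hsw2 1 2 3, hsw1 1 3 2],
        show D 0 1 3 = D 1 0 3 by rw [hsw1 0 1 3]]
    linarith [h]
  -- the bracket equals X
  have hbr : lieBr (X lam) (Y lam) x = X lam x := by
    unfold lieBr
    rw [hXd.fderiv, hYd.fderiv]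
    have hx1 : X lam x 1 = 0 := by
      simp [hX, Pi.single_apply]
    have hy1 : Y lam x 1 = lam - x 1 := by
      simp [hY, Pi.single_apply]
    simp only [ContinuousLinearMap.add_apply, ContinuousLinearMap.sub_apply,
      ContinuousLinearMap.smulRight_apply, ContinuousLinearMap.zero_apply,
      ContinuousLinearMap.proj_apply, hx1, hy1]
    rw [show fderiv ℝ (pd2 1 2 u) x (X lam x) = pd2 0 2 u x + fderiv ℝ (pd2 0 2 u) x (Y lam x)
        by linarith [key3],
      show fderiv ℝ (pd2 1 3 u) x (X lam x) = pd2 0 3 u x + fderiv ℝ (pd2 0 3 u) x (Y lam x)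
        by linarith [key2]]
    simp only [hX]
    module
  rw [hbr]
  exact Submodule.subset_span (Set.mem_insert _ _)
end
end
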